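/- Let a > 0 and B1 > B4 > 0, and let A0 be the weighted Fermat-Torricelli point of the square with vertices A1 = (-a/2, a/2), A2 = (a/2, a/2), A3 = (a/2, -a/2), A4 = (-a/2, -a/2) and weights B1 = B2 at A1, A2 and B3 = B4 at A3, A4. Writing α12 for the angle A1-A0-A2 and α34 for the angle A3-A0-A4, we have cos(α34/2) = (B1/B4) * cos(α12/2). -/

import Mathlib

open EuclideanGeometry

private lemma cos_half_horiz (s t : ℝ) (hs : 0 < s) (ht : 0 < t)
    (u v : EuclideanSpace ℝ (Fin 2))
    (hinner : inner (𝕜 := ℝ) u v = t^2 - s^2)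
    (hnu : ‖u‖ = Real.sqrt (s^2 + t^2)) (hnv : ‖v‖ = Real.sqrt (s^2 + t^2)) :
    Real.cos (InnerProductGeometry.angle u v / 2) = t / Real.sqrt (s^2 + t^2) := by
  have hr : 0 < Real.sqrt (s^2 + t^2) := Real.sqrt_pos.mpr (by positivity)
  have hcos : Real.cos (InnerProductGeometry.angle u v) = (t^2 - s^2)/(s^2 + t^2) := by
    rw [InnerProductGeometry.cos_angle, hinner, hnu, hnv,
      Real.mul_self_sqrt (by positivity)]
  have hb1 : InnerProductGeometry.angle u v ≤ Real.pi := InnerProductGeometry.angle_le_pi u v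
  have hb0 : -Real.pi ≤ InnerProductGeometry.angle u v := by
    have := InnerProductGeometry.angle_nonneg u v
    linarith [Real.pi_pos]
  rw [Real.cos_half hb0 hb1, hcos]
  have h2 : (1 + (t^2 - s^2)/(s^2 + t^2))/2 = (t / Real.sqrt (s^2 + t^2))^2 := by
    rw [div_pow, Real.sq_sqrt (by positivity)]
    field_simp
    ring
  rw [h2, Real.sqrt_sq (by positivity)]

theorem stmt_10 (a B1 B4 y : ℝ) (ha : 0 < a) (h14 : B4 < B1) (h4 : 0 < B4)
    (hmin : ∀ x : ℝ,
      B1 * Real.sqrt ((a/2)^2 + (a/2 - y)^2) + B4 * Real.sqrt ((a/2)^2 + (a/2 + y)^2) ≤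
      B1 * Real.sqrt ((a/2)^2 + (a/2 - x)^2) + B4 * Real.sqrt ((a/2)^2 + (a/2 + x)^2)) :
    let A1 : EuclideanSpace ℝ (Fin 2) := (WithLp.equiv 2 (Fin 2 → ℝ)).symm ![-(a/2), a/2]
    let A2 : EuclideanSpace ℝ (Fin 2) := (WithLp.equiv 2 (Fin 2 → ℝ)).symm ![a/2, a/2]
    let A3 : EuclideanSpace ℝ (Fin 2) := (WithLp.equiv 2 (Fin 2 → ℝ)).symm ![a/2, -(a/2)]
    let A4 : EuclideanSpace ℝ (Fin 2) := (WithLp.equiv 2 (Fin 2 → ℝ)).symm ![-(a/2), -(a/2)]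
    let A0 : EuclideanSpace ℝ (Fin 2) := (WithLp.equiv 2 (Fin 2 → ℝ)).symm ![0, y]
    Real.cos (∠ A3 A0 A4 / 2) = (B1 / B4) * Real.cos (∠ A1 A0 A2 / 2) := by
  intro A1 A2 A3 A4 A0
  set r1 := Real.sqrt ((a/2)^2 + (a/2 - y)^2) with hr1def
  set r4 := Real.sqrt ((a/2)^2 + (a/2 + y)^2) with hr4def
  have hc : 0 < a/2 := by linarith
  have hr1 : 0 < r1 := Real.sqrt_pos.mpr (by positivity)
  have hr4 : 0 < r4 := Real.sqrt_pos.mpr (by positivity)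
  -- Derivative vanishes at the minimizer
  have h1 : HasDerivAt (fun x => Real.sqrt ((a/2)^2 + (a/2 - x)^2))
      ((0 + (2:ℕ) * (a/2 - y)^(2-1) * (0 - 1)) / (2 * r1)) y := by
    have hg : HasDerivAt (fun x => (a/2)^2 + (a/2 - x)^2)
        (0 + (2:ℕ) * (a/2 - y)^(2-1) * (0 - 1)) y :=
      (hasDerivAt_const y ((a/2)^2)).add (((hasDerivAt_const y (a/2)).sub (hasDerivAt_id' y)).pow 2)
    exact hg.sqrt (by positivity)
  have h2 : HasDerivAt (fun x => Real.sqrt ((a/2)^2 + (a/2 + x)^2))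
      ((0 + (2:ℕ) * (a/2 + y)^(2-1) * (0 + 1)) / (2 * r4)) y := by
    have hg : HasDerivAt (fun x => (a/2)^2 + (a/2 + x)^2)
        (0 + (2:ℕ) * (a/2 + y)^(2-1) * (0 + 1)) y :=
      (hasDerivAt_const y ((a/2)^2)).add (((hasDerivAt_const y (a/2)).add (hasDerivAt_id' y)).pow 2)
    exact hg.sqrt (by positivity)
  have hD : HasDerivAt (fun x => B1 * Real.sqrt ((a/2)^2 + (a/2 - x)^2)
      + B4 * Real.sqrt ((a/2)^2 + (a/2 + x)^2))
      (B1 * ((0 + (2:ℕ) * (a/2 - y)^(2-1) * (0 - 1)) / (2 * r1))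
        + B4 * ((0 + (2:ℕ) * (a/2 + y)^(2-1) * (0 + 1)) / (2 * r4))) y :=
    (h1.const_mul B1).add (h2.const_mul B4)
  have hloc : IsLocalMin (fun x => B1 * Real.sqrt ((a/2)^2 + (a/2 - x)^2)
      + B4 * Real.sqrt ((a/2)^2 + (a/2 + x)^2)) y := Filter.Eventually.of_forall hmin
  have heq := hloc.hasDerivAt_eq_zero hD
  have hB1 : 0 < B1 := lt_trans h4 h14
  have hkey0 : B1 * (y - a/2) * r4 + B4 * (y + a/2) * r1 = 0 := by
    field_simp at heq
    nlinarith [heq, hr1, hr4]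
  have hy1 : y < a/2 := by
    by_contra h
    push_neg at h
    nlinarith [mul_pos hB1 hr4, mul_pos h4 hr1]
  have hy2 : -(a/2) < y := by
    by_contra h
    push_neg at h
    nlinarith [mul_pos hB1 hr4, mul_pos h4 hr1]
  have hkey : B1 * (a/2 - y) * r4 = B4 * (a/2 + y) * r1 := by linear_combination -hkey0
  -- Angle computations
  have hc12 : Real.cos (∠ A1 A0 A2 / 2) = (a/2 - y) / r1 := by
    rw [EuclideanGeometry.angle]
    rw [hr1def]
    apply cos_half_horiz (a/2) (a/2 - y) hc (by linarith)
    · simp [A1, A2, A0, vsub_eq_sub, PiLp.inner_apply, Fin.sum_univ_two, PiLp.sub_apply,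
        WithLp.equiv_symm_apply, PiLp.toLp_apply, RCLike.inner_apply]
      ring
    · rw [EuclideanSpace.norm_eq]
      congr 1
      simp [A1, A0, vsub_eq_sub, Fin.sum_univ_two, PiLp.sub_apply, WithLp.equiv_symm_apply, PiLp.toLp_apply]
    · rw [EuclideanSpace.norm_eq]
      congr 1
      simp [A2, A0, vsub_eq_sub, Fin.sum_univ_two, PiLp.sub_apply, WithLp.equiv_symm_apply, PiLp.toLp_apply]
  have hc34 : Real.cos (∠ A3 A0 A4 / 2) = (a/2 + y) / r4 := by
    rw [EuclideanGeometry.angle]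
    rw [hr4def]
    apply cos_half_horiz (a/2) (a/2 + y) hc (by linarith)
    · simp [A3, A4, A0, vsub_eq_sub, PiLp.inner_apply, Fin.sum_univ_two, PiLp.sub_apply,
        WithLp.equiv_symm_apply, PiLp.toLp_apply, RCLike.inner_apply]
      ring
    · rw [EuclideanSpace.norm_eq]
      congr 1
      simp [A3, A0, vsub_eq_sub, Fin.sum_univ_two, PiLp.sub_apply, WithLp.equiv_symm_apply, PiLp.toLp_apply]
      ring
    · rw [EuclideanSpace.norm_eq]
      congr 1
      simp [A4, A0, vsub_eq_sub, Fin.sum_univ_two, PiLp.sub_apply, WithLp.equiv_symm_apply, PiLp.toLp_apply]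
      ring
  rw [hc12, hc34, div_mul_div_comm, div_eq_div_iff (by positivity) (by positivity)]
  linear_combination -hkey
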